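/- Let T(λ) = -B_0 + λI + B_1/(λ - α_1) + ... + B_m/(λ - α_m) with n×n complex matrices B_i and distinct complex numbers α_i. Suppose R > max_i |α_i| satisfies R⁻¹‖B_0‖ + R⁻¹‖B_1‖/(R - |α_1|) + ... + R⁻¹‖B_m‖/(R - |α_m|) = 1 for an operator norm ‖·‖. Then for every λ_0 with |λ_0| > R and every unit vector v, ‖T(λ_0)v‖ > 0; in particular T(λ_0)v ≠ 0. -/

import Mathlib

/-- If `R` exceeds all pole moduli and satisfies
`R⁻¹‖B₀‖ + Σ R⁻¹‖Bᵢ‖/(R - |αᵢ|) = 1`, then for every `λ₀` with `|λ₀| > R` and every unit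
vector `v` one has `‖T(λ₀)v‖ > 0`, in particular `T(λ₀)v ≠ 0`.  The operator norm on
`V →L[ℂ] V` is induced by the vector norm on `V`. -/
theorem stmt_4 (V : Type*) [NormedAddCommGroup V] [NormedSpace ℂ V]
    (m : ℕ) (B0 : V →L[ℂ] V) (B : Fin m → V →L[ℂ] V)
    (α : Fin m → ℂ) (hα : Function.Injective α)
    (R : ℝ) (hRpos : 0 < R) (hαR : ∀ i, ‖α i‖ < R)
    (hEq : R⁻¹ * ‖B0‖ + ∑ i, R⁻¹ * ‖B i‖ / (R - ‖α i‖) = 1) :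
    ∀ lam0 : ℂ, R < ‖lam0‖ → ∀ v : V, ‖v‖ = 1 →
      0 < ‖(-B0 + lam0 • (1 : V →L[ℂ] V) + ∑ i, (lam0 - α i)⁻¹ • B i) v‖ ∧
      (-B0 + lam0 • (1 : V →L[ℂ] V) + ∑ i, (lam0 - α i)⁻¹ • B i) v ≠ 0 := by
  intro lam0 hlam v hv
  -- sum equation without R⁻¹
  have hsum : ‖B0‖ + ∑ i, ‖B i‖ / (R - ‖α i‖) = R := by
    have h := hEq
    have : R⁻¹ * (‖B0‖ + ∑ i, ‖B i‖ / (R - ‖α i‖)) = 1 := by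
      rw [mul_add, Finset.mul_sum]
      simp_rw [mul_div_assoc] at h
      exact h
    field_simp at this
    linarith [this]
  have habs : ∀ i : Fin m, ‖α i‖ < ‖lam0‖ := fun i =>
    (hαR i).trans hlam
  have hden : ∀ i : Fin m, (0:ℝ) < R - ‖α i‖ := fun i => by
    linarith [hαR i]
  have hden2 : ∀ i : Fin m, (0:ℝ) < ‖lam0‖ - ‖α i‖ := fun i => by
    linarith [habs i]
  have hsub : ∀ i : Fin m, ‖lam0‖ - ‖α i‖ ≤ ‖lam0 - α i‖ := by
    intro i
    simpa using norm_sub_norm_le lam0 (α i)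
  have hden3 : ∀ i : Fin m, (0:ℝ) < ‖lam0 - α i‖ := fun i =>
    lt_of_lt_of_le (hden2 i) (hsub i)
  -- bound each term
  have hterm : ∀ i : Fin m, ‖((lam0 - α i)⁻¹ • B i) v‖ ≤ ‖B i‖ / (R - ‖α i‖) := by
    intro i
    have h1 : ‖((lam0 - α i)⁻¹ • B i) v‖ = ‖(B i) v‖ / ‖lam0 - α i‖ := by
      simp [norm_smul, map_inv₀, div_eq_inv_mul]
    rw [h1]
    have h2 : ‖(B i) v‖ ≤ ‖B i‖ := by
      simpa [hv] using (B i).le_opNorm v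
    have h3 : R - ‖α i‖ ≤ ‖lam0 - α i‖ := by
      have := hsub i; linarith
    calc ‖(B i) v‖ / ‖lam0 - α i‖
        ≤ ‖B i‖ / ‖lam0 - α i‖ := by
          gcongr
      _ ≤ ‖B i‖ / (R - ‖α i‖) := by
          gcongr
          exact hden i
  -- norm lower bound
  have happly : (-B0 + lam0 • (1 : V →L[ℂ] V) + ∑ i, (lam0 - α i)⁻¹ • B i) v
      = lam0 • v + (-(B0 v) + (∑ i, (lam0 - α i)⁻¹ • B i) v) := by
    simp [ContinuousLinearMap.add_apply, ContinuousLinearMap.neg_apply]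
    abel
  have hnorm1 : ‖(∑ i, (lam0 - α i)⁻¹ • B i) v‖ ≤ ∑ i, ‖B i‖ / (R - ‖α i‖) := by
    rw [ContinuousLinearMap.sum_apply]
    exact (norm_sum_le _ _).trans (Finset.sum_le_sum fun i _ => hterm i)
  have hB0 : ‖B0 v‖ ≤ ‖B0‖ := by simpa [hv] using B0.le_opNorm v
  have hlow : ‖lam0‖ - (‖B0‖ + ∑ i, ‖B i‖ / (R - ‖α i‖))
      ≤ ‖(-B0 + lam0 • (1 : V →L[ℂ] V) + ∑ i, (lam0 - α i)⁻¹ • B i) v‖ := by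
    rw [happly]
    have h1 : ‖lam0 • v‖ = ‖lam0‖ := by
      simp [norm_smul, hv]
    have h2 : ‖-(B0 v) + (∑ i, (lam0 - α i)⁻¹ • B i) v‖
        ≤ ‖B0‖ + ∑ i, ‖B i‖ / (R - ‖α i‖) := by
      calc ‖-(B0 v) + (∑ i, (lam0 - α i)⁻¹ • B i) v‖
          ≤ ‖-(B0 v)‖ + ‖(∑ i, (lam0 - α i)⁻¹ • B i) v‖ := norm_add_le _ _
        _ ≤ ‖B0‖ + ∑ i, ‖B i‖ / (R - ‖α i‖) := by
            rw [norm_neg]; exact add_le_add hB0 hnorm1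
    have h3 := norm_add_le (lam0 • v + (-(B0 v) + (∑ i, (lam0 - α i)⁻¹ • B i) v))
      (-(-(B0 v) + (∑ i, (lam0 - α i)⁻¹ • B i) v))
    simp only [add_neg_cancel_right, norm_neg, h1] at h3
    linarith
  have hpos : 0 < ‖(-B0 + lam0 • (1 : V →L[ℂ] V) + ∑ i, (lam0 - α i)⁻¹ • B i) v‖ := by
    have : ‖lam0‖ - (‖B0‖ + ∑ i, ‖B i‖ / (R - ‖α i‖)) > 0 := by
      rw [hsum]; linarith
    linarith
  exact ⟨hpos, fun h => by simp [h] at hpos⟩
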